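/- Let T ∈ ℂ^{3×3} be symmetric trace-free and ξ ∈ ℂ³ with ξ ≠ 0 and ⟨ξ,ξ⟩ := Σ_j ξ_j² = 0. If (1/5)((Tξ) ⊗ ξ + ξ ⊗ (Tξ)) − (2/15)⟨Tξ,ξ⟩ 1₃ = 0, then Tξ = 0. -/
import Mathlib


open Finset

/-- Second case of the ℂ-ellipticity proof: if `ξ ≠ 0` is isotropic
(`⟨ξ,ξ⟩ = 0`) and the contracted symbol equation holds, then `Tξ = 0`. -/
theorem stmt7 (T : Matrix (Fin 3) (Fin 3) ℂ) (hsym : T.IsSymm)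
    (htr : Matrix.trace T = 0) (ξ : Fin 3 → ℂ) (hξ : ξ ≠ 0)
    (hiso : (∑ j, ξ j * ξ j) = 0)
    (h : ∀ i j : Fin 3,
      (1/5 : ℂ) * (T.mulVec ξ i * ξ j + ξ i * T.mulVec ξ j)
        - (2/15 : ℂ) * (∑ l, T.mulVec ξ l * ξ l) * (if i = j then (1:ℂ) else 0)
        = 0) :
    T.mulVec ξ = 0 := by
  set v := T.mulVec ξ with hv
  simp only [Fin.sum_univ_three] at hiso
  have h00 := h 0 0; have h01 := h 0 1; have h02 := h 0 2
  have h10 := h 1 0; have h11 := h 1 1; have h12 := h 1 2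
  have h20 := h 2 0; have h21 := h 2 1; have h22 := h 2 2
  simp only [Fin.sum_univ_three, if_pos rfl, if_true] at h00 h11 h22
  rw [if_neg (by decide)] at h01; rw [if_neg (by decide)] at h02
  rw [if_neg (by decide)] at h10; rw [if_neg (by decide)] at h12
  rw [if_neg (by decide)] at h20; rw [if_neg (by decide)] at h21
  simp only [Fin.sum_univ_three] at h01 h02 h10 h12 h20 h21
  obtain ⟨k, hk⟩ := Function.ne_iff.mp hξ
  have hk : ξ k ≠ 0 := hk
  have hs : v 0 * ξ 0 + v 1 * ξ 1 + v 2 * ξ 2 = 0 := by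
    fin_cases k
    · have h0 : (v 0 * ξ 0 + v 1 * ξ 1 + v 2 * ξ 2) * ξ 0 = 0 := by
        linear_combination (15 * ξ 0) * h00 + (15 * ξ 1) * h01 + (15 * ξ 2) * h02
          - 3 * v 0 * hiso
      exact (mul_eq_zero.mp h0).resolve_right hk
    · have h0 : (v 0 * ξ 0 + v 1 * ξ 1 + v 2 * ξ 2) * ξ 1 = 0 := by
        linear_combination (15 * ξ 0) * h10 + (15 * ξ 1) * h11 + (15 * ξ 2) * h12
          - 3 * v 1 * hiso
      exact (mul_eq_zero.mp h0).resolve_right hk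
    · have h0 : (v 0 * ξ 0 + v 1 * ξ 1 + v 2 * ξ 2) * ξ 2 = 0 := by
        linear_combination (15 * ξ 0) * h20 + (15 * ξ 1) * h21 + (15 * ξ 2) * h22
          - 3 * v 2 * hiso
      exact (mul_eq_zero.mp h0).resolve_right hk
  have hall : v 0 = 0 ∧ v 1 = 0 ∧ v 2 = 0 := by
    fin_cases k
    · have hv0 : v 0 = 0 := by
        have : v 0 * ξ 0 = 0 := by linear_combination (5/2) * h00 + (1/3) * hs
        exact (mul_eq_zero.mp this).resolve_right hk
      refine ⟨hv0, ?_, ?_⟩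
      · have : v 1 * ξ 0 = 0 := by linear_combination 5 * h10 - ξ 1 * hv0
        exact (mul_eq_zero.mp this).resolve_right hk
      · have : v 2 * ξ 0 = 0 := by linear_combination 5 * h20 - ξ 2 * hv0
        exact (mul_eq_zero.mp this).resolve_right hk
    · have hv1 : v 1 = 0 := by
        have : v 1 * ξ 1 = 0 := by linear_combination (5/2) * h11 + (1/3) * hs
        exact (mul_eq_zero.mp this).resolve_right hk
      refine ⟨?_, hv1, ?_⟩
      · have : v 0 * ξ 1 = 0 := by linear_combination 5 * h01 - ξ 0 * hv1
        exact (mul_eq_zero.mp this).resolve_right hk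
      · have : v 2 * ξ 1 = 0 := by linear_combination 5 * h21 - ξ 2 * hv1
        exact (mul_eq_zero.mp this).resolve_right hk
    · have hv2 : v 2 = 0 := by
        have : v 2 * ξ 2 = 0 := by linear_combination (5/2) * h22 + (1/3) * hs
        exact (mul_eq_zero.mp this).resolve_right hk
      refine ⟨?_, ?_, hv2⟩
      · have : v 0 * ξ 2 = 0 := by linear_combination 5 * h02 - ξ 0 * hv2
        exact (mul_eq_zero.mp this).resolve_right hk
      · have : v 1 * ξ 2 = 0 := by linear_combination 5 * h12 - ξ 1 * hv2
        exact (mul_eq_zero.mp this).resolve_right hk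
  funext i
  fin_cases i
  · exact hall.1
  · exact hall.2.1
  · exact hall.2.2
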